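/- Let 0 < η < 1 and let J₁, …, J_L (L ≥ 1) be pairwise disjoint subintervals of a bounded interval J ⊂ ℝ. Suppose that for every subinterval K ⊆ J that is a union of at least one of the J_l's, there exists an index l with J_l ⊆ K and |J_l| ≥ η·|K|. Then there exist a point t̄ ∈ J, an integer K ≥ −log(L)/(2·log(η/8)), and indices l₁, …, l_K such that |J_{l₁}| ≥ 2|J_{l₂}| ≥ 4|J_{l₃}| ≥ … ≥ 2^{K-1}|J_{l_K}| and dist(t̄, J_{l_k}) ≤ η^{-1}·|J_{l_k}| for every k = 1, …, K. -/

import Mathlib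

open Real

set_option maxHeartbeats 2000000

/-- Auxiliary conclusion predicate for the interval-concentration recursion. -/
def Conc (η : ℝ) (L : ℕ) (a b : Fin L → ℝ) (c d : ℝ) (m : ℕ) : Prop :=
  ∃ (K : ℕ) (ls : ℕ → Fin L) (tbar : ℝ), tbar ∈ Set.Icc c d ∧
    (m : ℝ) ≤ (8 / η) ^ (2 * K) ∧
    (∀ k, k < K → Set.Icc (a (ls k)) (b (ls k)) ⊆ Set.Icc c d) ∧
    (∀ k, k + 1 < K → 2 * (b (ls (k + 1)) - a (ls (k + 1))) ≤ b (ls k) - a (ls k)) ∧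
    (∀ k, k < K → Metric.infDist tbar (Set.Icc (a (ls k)) (b (ls k))) ≤
      η⁻¹ * (b (ls k) - a (ls k)))

theorem stmt_17 (η : ℝ) (hη0 : 0 < η) (hη1 : η < 1)
    (L : ℕ) (hL : 1 ≤ L) (A B : ℝ) (hAB : A ≤ B)
    (a b : Fin L → ℝ) (hab : ∀ l, a l ≤ b l)
    (hsub : ∀ l, Set.Icc (a l) (b l) ⊆ Set.Icc A B)
    (hdisj : Pairwise fun l l' => Disjoint (Set.Icc (a l) (b l)) (Set.Icc (a l') (b l')))
    (hprop : ∀ c d : ℝ, c ≤ d → Set.Icc c d ⊆ Set.Icc A B →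
      (∃ l, Set.Icc (a l) (b l) ⊆ Set.Icc c d) →
      ∃ l, Set.Icc (a l) (b l) ⊆ Set.Icc c d ∧ η * (d - c) ≤ b l - a l) :
    ∃ (tbar : ℝ) (_ : tbar ∈ Set.Icc A B) (K : ℕ) (ls : Fin K → Fin L),
      -(Real.log L) / (2 * Real.log (η / 8)) ≤ (K : ℝ) ∧
      (∀ (k : ℕ) (hk : k + 1 < K),
        2 * (b (ls ⟨k + 1, hk⟩) - a (ls ⟨k + 1, hk⟩)) ≤
          b (ls ⟨k, Nat.lt_of_succ_lt hk⟩) - a (ls ⟨k, Nat.lt_of_succ_lt hk⟩)) ∧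
      (∀ k : Fin K, Metric.infDist tbar (Set.Icc (a (ls k)) (b (ls k))) ≤
        η⁻¹ * (b (ls k) - a (ls k))) := by
  classical
  have hη8 : (0:ℝ) < 8 / η := by positivity
  have aux : ∀ m : ℕ, ∀ c d : ℝ, c ≤ d → Set.Icc c d ⊆ Set.Icc A B →
      (Finset.univ.filter fun l' => Set.Icc (a l') (b l') ⊆ Set.Icc c d).card = m →
      Conc η L a b c d m := by
    intro m
    induction m using Nat.strong_induction_on with
    | _ m IH =>
      intro c d hcd hcdAB hcard

      -- trivial case m = 0
      rcases Nat.eq_zero_or_pos m with hm0 | hmpos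
      · subst hm0
        exact ⟨0, fun _ => ⟨0, hL⟩, c, ⟨le_rfl, hcd⟩, by norm_num,
          fun k hk => absurd hk (Nat.not_lt_zero k),
          fun k hk => absurd hk (by omega),
          fun k hk => absurd hk (Nat.not_lt_zero k)⟩
      have hne : ∃ l', Set.Icc (a l') (b l') ⊆ Set.Icc c d := by
        have hpos : 0 < (Finset.univ.filter fun l' =>
            Set.Icc (a l') (b l') ⊆ Set.Icc c d).card := by omega
        obtain ⟨l₀, hl₀⟩ := Finset.card_pos.mp hpos
        exact ⟨l₀, (Finset.mem_filter.mp hl₀).2⟩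
      obtain ⟨l, hlsub, hllen⟩ := hprop c d hcd hcdAB hne
      by_cases hbase : (m : ℝ) ≤ (8 / η) ^ 2
      -- base case: small m, chain of length 1
      · refine ⟨1, fun _ => l, a l, hlsub (Set.left_mem_Icc.mpr (hab l)), ?_, fun k _ => hlsub,
          fun k hk => absurd hk (by omega), ?_⟩
        · calc (m : ℝ) ≤ (8 / η) ^ 2 := hbase
            _ = (8 / η) ^ (2 * 1) := by norm_num
        · intro k _
          rw [Metric.infDist_zero_of_mem (Set.left_mem_Icc.mpr (hab l))]
          exact mul_nonneg (by positivity) (by linarith [hab l])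
      push_neg at hbase
      have h64 : (64 : ℝ) ≤ (8 / η) ^ 2 := by
        rw [div_pow, le_div_iff₀ (by positivity)]
        nlinarith
      have hm2 : 2 ≤ m := by
        have : (2 : ℝ) ≤ (m : ℝ) := by linarith
        exact_mod_cast this
      have hdlt : c < d := by
        rcases eq_or_lt_of_le hcd with heq | h
        · exfalso
          have h2card : 1 < (Finset.univ.filter fun l' =>
              Set.Icc (a l') (b l') ⊆ Set.Icc c d).card := by omega
          obtain ⟨l₁, hl₁, l₂, hl₂, hne12⟩ := Finset.one_lt_card.mp h2card
          have hc1 : c ∈ Set.Icc (a l₁) (b l₁) := by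
            have h1 := (Finset.mem_filter.mp hl₁).2 ⟨le_rfl, hab l₁⟩
            rw [← heq] at h1
            have ha1 : a l₁ = c := le_antisymm h1.2 h1.1
            exact ⟨ha1.le, by rw [← ha1]; exact hab l₁⟩
          have hc2 : c ∈ Set.Icc (a l₂) (b l₂) := by
            have h2 := (Finset.mem_filter.mp hl₂).2 ⟨le_rfl, hab l₂⟩
            rw [← heq] at h2
            have ha2 : a l₂ = c := le_antisymm h2.2 h2.1
            exact ⟨ha2.le, by rw [← ha2]; exact hab l₂⟩
          exact Set.disjoint_left.mp (hdisj hne12) hc1 hc2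
        · exact h
      obtain ⟨ℓ, hℓdef⟩ : ∃ x : ℝ, x = b l - a l := ⟨_, rfl⟩
      rw [← hℓdef] at hllen
      have hℓpos : 0 < ℓ := lt_of_lt_of_le (mul_pos hη0 (by linarith)) hllen
      -- the key grid/pigeonhole step, stated for either side of J_l
      have key : ∀ p q : ℝ, p ≤ q → Set.Icc p q ⊆ Set.Icc c d →
          ((m : ℝ) - 1) / 2 ≤ ((Finset.univ.filter fun l' =>
            Set.Icc (a l') (b l') ⊆ Set.Icc p q).card : ℝ) →
          Conc η L a b c d m := by
        intro p q hpq hpqcd hhalfcard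
        set Spq := Finset.univ.filter fun l' =>
          Set.Icc (a l') (b l') ⊆ Set.Icc p q with hSpqdef
        have hqp : q - p ≤ d - c := by
          have h1 : c ≤ p := (hpqcd ⟨le_rfl, hpq⟩).1
          have h2 : q ≤ d := (hpqcd ⟨hpq, le_rfl⟩).2
          linarith
        have hqpℓ : q - p ≤ ℓ / η := by
          rw [le_div_iff₀ hη0]
          nlinarith
        obtain ⟨N, hNdef⟩ : ∃ n : ℕ, n = ⌊4 * (q - p) / ℓ⌋₊ + 1 := ⟨_, rfl⟩
        have hNpos : 0 < N := by rw [hNdef]; exact Nat.succ_pos _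
        have hNposR : (0 : ℝ) < N := by exact_mod_cast hNpos
        have hNub : (N : ℝ) ≤ 4 / η + 1 := by
          have h1 : (⌊4 * (q - p) / ℓ⌋₊ : ℝ) ≤ 4 * (q - p) / ℓ :=
            Nat.floor_le (div_nonneg (by linarith) hℓpos.le)
          have h2 : 4 * (q - p) / ℓ ≤ 4 / η := by
            rw [div_le_div_iff₀ hℓpos hη0]
            nlinarith
          have : (N : ℝ) = (⌊4 * (q - p) / ℓ⌋₊ : ℝ) + 1 := by
            rw [hNdef]; push_cast; ring
          linarith
        set jdx : Fin L → ℕ := fun l' => ⌊4 * (a l' - p) / ℓ⌋₊ with hjdxdef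
        have hmaps : ∀ l' ∈ Spq, jdx l' ∈ Finset.range N := by
          intro l' hl'
          have hsub' := (Finset.mem_filter.mp hl').2
          have haq : a l' ≤ q := (hsub' ⟨le_rfl, hab l'⟩).2
          have hpa : p ≤ a l' := (hsub' ⟨le_rfl, hab l'⟩).1
          have : jdx l' ≤ ⌊4 * (q - p) / ℓ⌋₊ := by
            apply Nat.floor_mono
            gcongr <;> linarith
          simp only [Finset.mem_range, hNdef]
          omega
        have hsumfib : Spq.card = ∑ j ∈ Finset.range N,
            (Spq.filter fun l' => jdx l' = j).card :=
          Finset.card_eq_sum_card_fiberwise hmaps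
        -- pigeonhole: some fiber is large
        obtain ⟨j, hjmem, hjfib⟩ : ∃ j ∈ Finset.range N,
            (Spq.card : ℝ) / N ≤ ((Spq.filter fun l' => jdx l' = j).card : ℝ) := by
          by_contra hcon
          push_neg at hcon
          have hlt : ∑ j ∈ Finset.range N,
              ((Spq.filter fun l' => jdx l' = j).card : ℝ) <
              ∑ _j ∈ Finset.range N, (Spq.card : ℝ) / N := by
            apply Finset.sum_lt_sum_of_nonempty ⟨0, Finset.mem_range.mpr hNpos⟩
            intro j hj
            exact hcon j hj
          rw [Finset.sum_const, Finset.card_range, nsmul_eq_mul,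
            mul_div_cancel₀ _ (ne_of_gt hNposR)] at hlt
          have : ((Spq.card : ℕ) : ℝ) = ∑ j ∈ Finset.range N,
              ((Spq.filter fun l' => jdx l' = j).card : ℝ) := by
            rw [hsumfib]; push_cast; ring
          linarith
        set Fj := Spq.filter fun l' => jdx l' = j with hFjdef
        have hSpqpos : (0 : ℝ) < (Spq.card : ℝ) := by
          have hm2R : (2 : ℝ) ≤ (m : ℝ) := by exact_mod_cast hm2
          calc (0:ℝ) < ((m:ℝ) - 1)/2 := by linarith
            _ ≤ _ := hhalfcard
        have hfibpos : (0 : ℝ) < (Fj.card : ℝ) :=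
          lt_of_lt_of_le (div_pos hSpqpos hNposR) hjfib
        have hFjne : Fj.Nonempty := Finset.card_pos.mp (by exact_mod_cast hfibpos)
        -- location bounds for members of the fiber
        have hFjbound : ∀ l' ∈ Fj, p + (j : ℝ) * (ℓ/4) ≤ a l' ∧
            a l' < p + (j : ℝ) * (ℓ/4) + ℓ/4 ∧
            Set.Icc (a l') (b l') ⊆ Set.Icc p q := by
          intro l' hl'
          obtain ⟨hl'S, hl'j⟩ := Finset.mem_filter.mp hl'
          have hsub' := (Finset.mem_filter.mp hl'S).2
          have hpa : p ≤ a l' := (hsub' (Set.left_mem_Icc.mpr (hab l'))).1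
          have hfl : (j : ℝ) ≤ 4 * (a l' - p) / ℓ := by
            rw [← hl'j]
            exact Nat.floor_le (div_nonneg (by linarith) hℓpos.le)
          have hfu : 4 * (a l' - p) / ℓ < (j : ℝ) + 1 := by
            rw [← hl'j]
            push_cast
            exact Nat.lt_floor_add_one _
          have h1 : (j : ℝ) * ℓ ≤ 4 * (a l' - p) := (le_div_iff₀ hℓpos).mp hfl
          have h2 : 4 * (a l' - p) < ((j : ℝ) + 1) * ℓ := (div_lt_iff₀ hℓpos).mp hfu
          exact ⟨by nlinarith, by nlinarith, hsub'⟩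
        obtain ⟨u, hudef⟩ : ∃ x : ℝ, x = p + (j : ℝ) * (ℓ/4) := ⟨_, rfl⟩
        rw [← hudef] at hFjbound
        obtain ⟨v, hvdef⟩ : ∃ x : ℝ, x = min q (u + ℓ/2) := ⟨_, rfl⟩
        obtain ⟨l₃, hl₃⟩ := hFjne
        have huq : u ≤ q := by
          have h1 := (hFjbound l₃ hl₃).1
          have h2 : a l₃ ≤ q :=
            ((hFjbound l₃ hl₃).2.2 (Set.left_mem_Icc.mpr (hab l₃))).2
          linarith
        have huv : u ≤ v := by rw [hvdef]; exact le_min huq (by linarith)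
        have hpu : p ≤ u := by
          have hj0 : (0:ℝ) ≤ (j:ℝ) := Nat.cast_nonneg j
          have hprod : (0:ℝ) ≤ (j:ℝ) * (ℓ/4) := mul_nonneg hj0 (by linarith)
          rw [hudef]; linarith
        have hvu2 : v ≤ u + ℓ/2 := by rw [hvdef]; exact min_le_right _ _
        have hvq : v ≤ q := by rw [hvdef]; exact min_le_left _ _
        have huvpq : Set.Icc u v ⊆ Set.Icc p q := Set.Icc_subset_Icc hpu hvq
        -- at most one "long" interval in the fiber
        have hlongunique : ∀ x ∈ Fj, ∀ y ∈ Fj, ℓ/4 < b x - a x → ℓ/4 < b y - a y →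
            x = y := by
          have hsym : ∀ x ∈ Fj, ∀ y ∈ Fj, ℓ/4 < b x - a x → a x ≤ a y → x = y := by
            intro x hx y hy hlx haxy
            by_contra hne
            obtain ⟨hbx1, hbx2, -⟩ := hFjbound x hx
            obtain ⟨hby1, hby2, -⟩ := hFjbound y hy
            have hayb : a y ≤ b x := by linarith
            have hmem1 : a y ∈ Set.Icc (a x) (b x) := ⟨haxy, hayb⟩
            exact Set.disjoint_left.mp (hdisj hne) hmem1
              (Set.left_mem_Icc.mpr (hab y))
          intro x hx y hy hlx hly
          rcases le_total (a x) (a y) with h | h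
          · exact hsym x hx y hy hlx h
          · exact (hsym y hy x hx hly h).symm
        -- short intervals of the fiber are contained in the subwindow
        have hshort : ∀ l' ∈ Fj, b l' - a l' ≤ ℓ/4 →
            Set.Icc (a l') (b l') ⊆ Set.Icc u v := by
          intro l' hl' hsh
          have hb := hFjbound l' hl'
          have hbq : b l' ≤ q := (hb.2.2 (Set.right_mem_Icc.mpr (hab l'))).2
          refine Set.Icc_subset_Icc hb.1 ?_
          rw [hvdef]
          exact le_min hbq (by linarith [hb.2.1])
        obtain ⟨m₂, hm₂def⟩ : ∃ n : ℕ, n = (Finset.univ.filter fun l' =>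
          Set.Icc (a l') (b l') ⊆ Set.Icc u v).card := ⟨_, rfl⟩
        have hcount : Fj.card ≤ m₂ + 1 := by
          have hsplit := Finset.card_filter_add_card_filter_not
            (s := Fj) (p := fun l' => b l' - a l' ≤ ℓ/4)
          have hlongcard : (Fj.filter fun l' => ¬ (b l' - a l' ≤ ℓ/4)).card ≤ 1 := by
            apply Finset.card_le_one.mpr
            intro x hx y hy
            obtain ⟨hx1, hx2⟩ := Finset.mem_filter.mp hx
            obtain ⟨hy1, hy2⟩ := Finset.mem_filter.mp hy
            push_neg at hx2 hy2
            exact hlongunique x hx1 y hy1 hx2 hy2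
          have hshortcard : (Fj.filter fun l' => b l' - a l' ≤ ℓ/4).card ≤ m₂ := by
            rw [hm₂def]
            apply Finset.card_le_card
            intro x hx
            obtain ⟨hx1, hx2⟩ := Finset.mem_filter.mp hx
            exact Finset.mem_filter.mpr ⟨Finset.mem_univ x, hshort x hx1 hx2⟩
          omega
        have hm₂lt : m₂ < m := by
          have hsubset : (Finset.univ.filter fun l' =>
              Set.Icc (a l') (b l') ⊆ Set.Icc u v) ⊆
              (Finset.univ.filter fun l' =>
                Set.Icc (a l') (b l') ⊆ Set.Icc c d).erase l := by
            intro x hx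
            have hx2 := (Finset.mem_filter.mp hx).2
            rw [Finset.mem_erase]
            constructor
            · rintro rfl
              have h1 : u ≤ a x := (hx2 (Set.left_mem_Icc.mpr (hab x))).1
              have h2 : b x ≤ v := (hx2 (Set.right_mem_Icc.mpr (hab x))).2
              have : ℓ ≤ ℓ/2 := by linarith [hℓdef, hvu2]
              linarith
            · exact Finset.mem_filter.mpr ⟨Finset.mem_univ x,
                fun t ht => hpqcd (huvpq (hx2 ht))⟩
          have hlmem : l ∈ (Finset.univ.filter fun l' =>
              Set.Icc (a l') (b l') ⊆ Set.Icc c d) :=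
            Finset.mem_filter.mpr ⟨Finset.mem_univ l, hlsub⟩
          have hcle := Finset.card_le_card hsubset
          rw [Finset.card_erase_of_mem hlmem, hcard, ← hm₂def] at hcle
          omega
        -- numerics: the subwindow still contains many intervals
        have hqℓ : η * (q - p) ≤ ℓ := by nlinarith [hqp, hllen, hη0.le]
        have hNη : (N : ℝ) * η ≤ 4 + η := by
          have hF : ((⌊4 * (q - p) / ℓ⌋₊ : ℕ) : ℝ) ≤ 4 * (q - p) / ℓ :=
            Nat.floor_le (div_nonneg (by linarith) hℓpos.le)
          have hFℓ : ((⌊4 * (q - p) / ℓ⌋₊ : ℕ) : ℝ) * ℓ ≤ 4 * (q - p) :=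
            (le_div_iff₀ hℓpos).mp hF
          have hcast : (N : ℝ) = ((⌊4 * (q - p) / ℓ⌋₊ : ℕ) : ℝ) + 1 := by
            rw [hNdef]; push_cast; ring
          nlinarith [mul_le_mul_of_nonneg_right hFℓ hη0.le, hqℓ, hℓpos, hcast]
        have e1 : (Spq.card : ℝ) ≤ (Fj.card : ℝ) * N := (div_le_iff₀ hNposR).mp hjfib
        have e2 : (Fj.card : ℝ) ≤ (m₂ : ℝ) + 1 := by exact_mod_cast hcount
        have hm₂0 : (0:ℝ) ≤ (m₂ : ℝ) := Nat.cast_nonneg _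
        have hkey1 : η * (m : ℝ) ≤ 10 * (m₂ : ℝ) + 11 := by
          have t1 : η * (Spq.card : ℝ) ≤ η * ((Fj.card : ℝ) * N) :=
            mul_le_mul_of_nonneg_left e1 hη0.le
          have t2 : (Fj.card : ℝ) * ((N:ℝ) * η) ≤ 5 * (Fj.card : ℝ) := by
            have h5 : (0:ℝ) ≤ 5 - (N:ℝ) * η := by linarith
            nlinarith [mul_nonneg h5 hfibpos.le]
          have t3 : η * (((m:ℝ) - 1)/2) ≤ η * (Spq.card : ℝ) :=
            mul_le_mul_of_nonneg_left hhalfcard hη0.le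
          nlinarith [t1, t2, t3, e2, hη1.le]
        have hbig' : (64 : ℝ) < η^2 * (m : ℝ) := by
          have h82 : (8/η)^2 = 64 / η^2 := by rw [div_pow]; norm_num
          rw [h82] at hbase
          have := (div_lt_iff₀ (by positivity : (0:ℝ) < η^2)).mp hbase
          nlinarith [this]
        have hη2m : η^2 * (m:ℝ) ≤ 10 * (m₂ : ℝ) + 11 := by
          have hA := mul_le_mul_of_nonneg_left hkey1 hη0.le
          have hB : (0:ℝ) ≤ (1 - η) * (10*(m₂:ℝ)+11) :=
            mul_nonneg (by linarith) (by linarith)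
          nlinarith [hA, hB]
        have hm₂1R : (1 : ℝ) ≤ (m₂ : ℝ) := by linarith
        have hfin2 : (m : ℝ) ≤ (8/η)^2 * (m₂ : ℝ) := by
          have h82 : (8/η)^2 = 64 / η^2 := by rw [div_pow]; norm_num
          rw [h82, div_mul_eq_mul_div, le_div_iff₀ (by positivity : (0:ℝ) < η^2)]
          nlinarith [hη2m, hm₂1R]
        -- apply the induction hypothesis to the subwindow
        obtain ⟨K', ls', tbar, htbar, hcard', hsubs', hhalf', hdist'⟩ :=
          IH m₂ hm₂lt u v huv
            (fun t ht => hcdAB (hpqcd (huvpq ht))) hm₂def.symm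
        have htcd : tbar ∈ Set.Icc c d := hpqcd (huvpq htbar)
        refine ⟨K' + 1, fun n => if n = 0 then l else ls' (n - 1), tbar, htcd,
          ?_, ?_, ?_, ?_⟩
        · calc (m : ℝ) ≤ (8/η)^2 * (m₂ : ℝ) := hfin2
            _ ≤ (8/η)^2 * (8/η)^(2*K') :=
              mul_le_mul_of_nonneg_left hcard' (by positivity)
            _ = (8/η)^(2*(K'+1)) := by
              rw [show 2*(K'+1) = 2 + 2*K' by ring, pow_add]
        · intro k hk
          cases k with
          | zero => simpa using hlsub
          | succ n =>
            simp only [Nat.succ_ne_zero, if_false, Nat.succ_sub_one]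
            exact fun t ht => hpqcd (huvpq (hsubs' n (by omega) ht))
        · intro k hk
          cases k with
          | zero =>
            simp only [Nat.succ_ne_zero, if_false, Nat.succ_sub_one, if_pos rfl, if_true, eq_self_iff_true]
            have h0 := hsubs' 0 (by omega)
            have h1 : u ≤ a (ls' 0) := (h0 (Set.left_mem_Icc.mpr (hab (ls' 0)))).1
            have h2 : b (ls' 0) ≤ v := (h0 (Set.right_mem_Icc.mpr (hab (ls' 0)))).2
            linarith [hℓdef, hvu2]
          | succ n =>
            simp only [Nat.succ_ne_zero, if_false, Nat.succ_sub_one]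
            exact hhalf' n (by omega)
        · intro k hk
          cases k with
          | zero =>
            simp only [if_pos rfl, if_true, eq_self_iff_true]
            have h1 : Metric.infDist tbar (Set.Icc (a l) (b l)) ≤ dist tbar (a l) :=
              Metric.infDist_le_dist_of_mem (Set.left_mem_Icc.mpr (hab l))
            have hal : a l ∈ Set.Icc c d := hlsub (Set.left_mem_Icc.mpr (hab l))
            have h2 : dist tbar (a l) ≤ d - c := by
              rw [Real.dist_eq, abs_sub_le_iff]
              exact ⟨by linarith [htcd.1, htcd.2, hal.1, hal.2],
                by linarith [htcd.1, htcd.2, hal.1, hal.2]⟩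
            have h3 : d - c ≤ η⁻¹ * ℓ := by
              have ht : η * (d - c) ≤ η * (η⁻¹ * ℓ) := by
                rw [← mul_assoc, mul_inv_cancel₀ (ne_of_gt hη0), one_mul]
                exact hllen
              exact (mul_le_mul_iff_of_pos_left hη0).mp ht
            rw [← hℓdef]
            linarith
          | succ n =>
            simp only [Nat.succ_ne_zero, if_false, Nat.succ_sub_one]
            exact hdist' n (by omega)
      -- split on the two sides of J_l and apply `key` to the bigger one
      have hcal : c ≤ a l := (hlsub (Set.left_mem_Icc.mpr (hab l))).1
      have hbld : b l ≤ d := (hlsub (Set.right_mem_Icc.mpr (hab l))).2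
      have hcbl : c ≤ b l := (hlsub (Set.right_mem_Icc.mpr (hab l))).1
      have hald : a l ≤ d := (hlsub (Set.left_mem_Icc.mpr (hab l))).2
      have hsplit : (Finset.univ.filter fun l' =>
          Set.Icc (a l') (b l') ⊆ Set.Icc c d) ⊆
          ((Finset.univ.filter fun l' => Set.Icc (a l') (b l') ⊆ Set.Icc c (a l)) ∪
           (Finset.univ.filter fun l' => Set.Icc (a l') (b l') ⊆ Set.Icc (b l) d)) ∪
          {l} := by
        intro x hx
        rcases eq_or_ne x l with rfl | hne
        · exact Finset.mem_union_right _ (Finset.mem_singleton_self x)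
        have hxsub := (Finset.mem_filter.mp hx).2
        have hxc : c ≤ a x := (hxsub (Set.left_mem_Icc.mpr (hab x))).1
        have hxd : b x ≤ d := (hxsub (Set.right_mem_Icc.mpr (hab x))).2
        have hdich : b x < a l ∨ b l < a x := by
          by_contra hcon
          push_neg at hcon
          obtain ⟨h1, h2⟩ := hcon
          have hmemx : max (a l) (a x) ∈ Set.Icc (a x) (b x) :=
            ⟨le_max_right _ _, max_le h1 (hab x)⟩
          have hmeml : max (a l) (a x) ∈ Set.Icc (a l) (b l) :=
            ⟨le_max_left _ _, max_le (hab l) h2⟩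
          exact Set.disjoint_left.mp (hdisj hne) hmemx hmeml
        apply Finset.mem_union_left
        rcases hdich with h | h
        · exact Finset.mem_union_left _ (Finset.mem_filter.mpr
            ⟨Finset.mem_univ x, Set.Icc_subset_Icc hxc h.le⟩)
        · exact Finset.mem_union_right _ (Finset.mem_filter.mpr
            ⟨Finset.mem_univ x, Set.Icc_subset_Icc h.le hxd⟩)
      have hcardsplit : m ≤
          (Finset.univ.filter fun l' =>
            Set.Icc (a l') (b l') ⊆ Set.Icc c (a l)).card +
          (Finset.univ.filter fun l' =>
            Set.Icc (a l') (b l') ⊆ Set.Icc (b l) d).card + 1 := by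
        have h1 := Finset.card_le_card hsplit
        have h2 := Finset.card_union_le
          ((Finset.univ.filter fun l' => Set.Icc (a l') (b l') ⊆ Set.Icc c (a l)) ∪
           (Finset.univ.filter fun l' => Set.Icc (a l') (b l') ⊆ Set.Icc (b l) d))
          ({l} : Finset (Fin L))
        have h3 := Finset.card_union_le
          (Finset.univ.filter fun l' => Set.Icc (a l') (b l') ⊆ Set.Icc c (a l))
          (Finset.univ.filter fun l' => Set.Icc (a l') (b l') ⊆ Set.Icc (b l) d)
        rw [hcard] at h1
        simp only [Finset.card_singleton] at h2
        omega
      have hcastsplit : (m : ℝ) ≤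
          ((Finset.univ.filter fun l' =>
            Set.Icc (a l') (b l') ⊆ Set.Icc c (a l)).card : ℝ) +
          ((Finset.univ.filter fun l' =>
            Set.Icc (a l') (b l') ⊆ Set.Icc (b l) d).card : ℝ) + 1 := by
        exact_mod_cast hcardsplit
      rcases le_total
        ((Finset.univ.filter fun l' =>
          Set.Icc (a l') (b l') ⊆ Set.Icc c (a l)).card)
        ((Finset.univ.filter fun l' =>
          Set.Icc (a l') (b l') ⊆ Set.Icc (b l) d).card) with hside | hside
      · apply key (b l) d hbld (Set.Icc_subset_Icc hcbl le_rfl)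
        have hsideR : ((Finset.univ.filter fun l' =>
            Set.Icc (a l') (b l') ⊆ Set.Icc c (a l)).card : ℝ) ≤
            ((Finset.univ.filter fun l' =>
            Set.Icc (a l') (b l') ⊆ Set.Icc (b l) d).card : ℝ) := by
          exact_mod_cast hside
        linarith
      · apply key c (a l) hcal (Set.Icc_subset_Icc le_rfl hald)
        have hsideR : ((Finset.univ.filter fun l' =>
            Set.Icc (a l') (b l') ⊆ Set.Icc (b l) d).card : ℝ) ≤
            ((Finset.univ.filter fun l' =>
            Set.Icc (a l') (b l') ⊆ Set.Icc c (a l)).card : ℝ) := by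
          exact_mod_cast hside
        linarith

  have hfull : (Finset.univ.filter fun l' => Set.Icc (a l') (b l') ⊆ Set.Icc A B)
      = Finset.univ := by
    apply Finset.filter_true_of_mem
    intro l _
    exact hsub l
  obtain ⟨K, ls, tbar, htbar, hKcard, hsubs, hhalf, hdist⟩ :=
    aux L A B hAB subset_rfl (by rw [hfull]; simp)
  refine ⟨tbar, htbar, K, fun k => ls k.val, ?_, ?_, ?_⟩
  · -- the logarithmic lower bound on K
    have hLpos : (0:ℝ) < (L:ℝ) := by exact_mod_cast hL
    have hlog1 : Real.log (η / 8) = - Real.log (8 / η) := by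
      rw [← Real.log_inv]
      norm_num
    have hlog8 : 0 < Real.log (8 / η) := by
      apply Real.log_pos
      rw [lt_div_iff₀ hη0]
      nlinarith
    have hlogL : Real.log L ≤ (2 * K : ℝ) * Real.log (8 / η) := by
      have := Real.log_le_log hLpos hKcard
      rwa [Real.log_pow, Nat.cast_mul, Nat.cast_ofNat] at this
    have hneg : 2 * Real.log (η / 8) < 0 := by rw [hlog1]; linarith
    rw [div_le_iff_of_neg hneg]
    rw [hlog1]
    nlinarith
  · intro k hk
    exact hhalf k hk
  · intro k
    exact hdist k.val k.isLt
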